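/- Let d' and d'' be two closed unit disks in ℝ² and let e be a vertical line x = c. Suppose the boundary circles of d' and d'' do not intersect in the closed half-plane x ≤ c. Then for the regions restricted to that half-plane, one of the disks' intersections with the half-plane is contained in the other's: either d' ∩ {x ≤ c} ⊆ d'' ∩ {x ≤ c} or d'' ∩ {x ≤ c} ⊆ d' ∩ {x ≤ c}, provided both disks intersect the half-plane and each other. -/

import Mathlib

open scoped RealInnerProductSpace

private lemma convexH (c : ℝ) : Convex ℝ {x : EuclideanSpace ℝ (Fin 2) | x 0 ≤ c} := by
  intro x hx y hy a b ha hb hab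
  simp only [Set.mem_setOf_eq] at *
  have h : (a • x + b • y) 0 = a * x 0 + b * y 0 := by
    simp [PiLp.add_apply, PiLp.smul_apply, smul_eq_mul]
  rw [h]
  have h1 : a * x 0 ≤ a * c := mul_le_mul_of_nonneg_left hx ha
  have h2 : b * y 0 ≤ b * c := mul_le_mul_of_nonneg_left hy hb
  have h3 : a * c + b * c = c := by rw [← add_mul, hab, one_mul]
  linarith

private lemma seg_ivt {E : Type*} [NormedAddCommGroup E] [NormedSpace ℝ E] (β p r : E)
    (h0 : 1 ≤ dist p β) (h1 : dist r β ≤ 1) :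
    ∃ t ∈ Set.Icc (0:ℝ) 1, dist ((1-t)•p + t•r) β = 1 := by
  set f : ℝ → ℝ := fun t => dist ((1-t)•p + t•r) β with hf
  have hcont : Continuous f := by
    apply Continuous.dist _ continuous_const
    exact ((continuous_const.sub continuous_id).smul continuous_const).add
      (continuous_id.smul continuous_const)
  have hsub := intermediate_value_Icc' (by norm_num : (0:ℝ) ≤ 1) hcont.continuousOn
  have hmem : (1:ℝ) ∈ Set.Icc (f 1) (f 0) := by
    constructor <;> simp [hf] <;> assumption
  obtain ⟨t, ht, hft⟩ := hsub hmem
  exact ⟨t, ht, hft⟩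

private lemma norm_expand {E : Type*} [NormedAddCommGroup E] [InnerProductSpace ℝ E]
    (a b : E) (s : ℝ) :
    ‖a + s • b‖^2 = ‖a‖^2 + 2 * s * ⟪a, b⟫ + s^2 * ‖b‖^2 := by
  rw [norm_add_sq_real, real_inner_smul_right, norm_smul]
  simp [mul_pow]
  ring


private lemma perp_exists (α α' : EuclideanSpace ℝ (Fin 2)) (h : ¬ α = α') :
    ∃ v : EuclideanSpace ℝ (Fin 2), ⟪α' - α, v⟫ = 0 ∧ 0 < ‖v‖ ∧ v 0 ≤ 0 := by
  classical
  have hinner : ∀ x y : EuclideanSpace ℝ (Fin 2), ⟪x, y⟫ = x 0 * y 0 + x 1 * y 1 := fun x y => by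
    simp [PiLp.inner_apply, RCLike.inner_apply, Fin.sum_univ_two]; ring
  set d0 := α' 0 - α 0 with hd0
  set d1 := α' 1 - α 1 with hd1
  have hdne : d0 ≠ 0 ∨ d1 ≠ 0 := by
    by_contra hcc
    push_neg at hcc
    apply h
    have h0 : α 0 = α' 0 := by have := hcc.1; rw [hd0] at this; linarith
    have h1 : α 1 = α' 1 := by have := hcc.2; rw [hd1] at this; linarith
    ext i
    fin_cases i
    · exact h0
    · exact h1
  set v : EuclideanSpace ℝ (Fin 2) :=
    (WithLp.equiv 2 (Fin 2 → ℝ)).symm ![-|d1|, if 0 ≤ d1 then d0 else -d0] with hv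
  have hv0 : v 0 = -|d1| := by rw [hv]; simp [PiLp.toLp_apply]
  have hv1 : v 1 = if 0 ≤ d1 then d0 else -d0 := by rw [hv]; simp [PiLp.toLp_apply]
  have e0 : (α' - α) 0 = d0 := by simp [hd0, PiLp.sub_apply]
  have e1 : (α' - α) 1 = d1 := by simp [hd1, PiLp.sub_apply]
  refine ⟨v, ?_, ?_, ?_⟩
  · rw [hinner, hv0, hv1, e0, e1]
    split_ifs with hsign
    · rw [abs_of_nonneg hsign]; ring
    · rw [abs_of_neg (lt_of_not_ge hsign)]; ring
  · have hvsq : ‖v‖^2 = d0^2 + d1^2 := by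
      rw [EuclideanSpace.norm_eq, Real.sq_sqrt (by positivity), Fin.sum_univ_two, hv0, hv1]
      split_ifs <;> simp [sq_abs, Real.norm_eq_abs] <;> ring
    have hdpos : 0 < d0^2 + d1^2 := by
      rcases hdne with h0 | h0
      · nlinarith [sq_nonneg d1, mul_self_pos.mpr h0]
      · nlinarith [sq_nonneg d0, mul_self_pos.mpr h0]
    nlinarith [norm_nonneg v]
  · rw [hv0]
    simp [neg_nonpos, abs_nonneg]


/-- If the boundary circles of two closed unit disks do not intersect in the
half-plane `x ≤ c`, and the two disks overlap each other within that half-plane,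
then one disk's intersection with the half-plane contains the other's. -/
theorem stmt_2 (α α' : EuclideanSpace ℝ (Fin 2)) (c : ℝ)
    (H : Set (EuclideanSpace ℝ (Fin 2)))
    (hH : H = {x | x 0 ≤ c})
    (hcirc : ¬ ∃ x, dist x α = 1 ∧ dist x α' = 1 ∧ x ∈ H)
    (h1 : (Metric.closedBall α 1 ∩ H).Nonempty)
    (h2 : (Metric.closedBall α' 1 ∩ H).Nonempty)
    (h12 : (Metric.closedBall α 1 ∩ Metric.closedBall α' 1 ∩ H).Nonempty) :
    Metric.closedBall α 1 ∩ H ⊆ Metric.closedBall α' 1 ∩ H ∨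
    Metric.closedBall α' 1 ∩ H ⊆ Metric.closedBall α 1 ∩ H := by
  by_cases hαα : α = α'
  · subst hαα; exact Or.inl subset_rfl
  by_contra hcon
  push_neg at hcon
  obtain ⟨hcA, hcB⟩ := hcon
  obtain ⟨p, hp, hpn⟩ := Set.not_subset.mp hcA
  obtain ⟨q, hq, hqn⟩ := Set.not_subset.mp hcB
  obtain ⟨r, hr⟩ := h12
  have hrA : dist r α ≤ 1 := Metric.mem_closedBall.mp hr.1.1
  have hrB : dist r α' ≤ 1 := Metric.mem_closedBall.mp hr.1.2
  have hrH : r ∈ H := hr.2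
  have hpA : dist p α ≤ 1 := Metric.mem_closedBall.mp hp.1
  have hpH : p ∈ H := hp.2
  have hpB : 1 < dist p α' := by
    by_contra h; push_neg at h
    exact hpn ⟨Metric.mem_closedBall.mpr h, hpH⟩
  have hqB : dist q α' ≤ 1 := Metric.mem_closedBall.mp hq.1
  have hqH : q ∈ H := hq.2
  have hqA : 1 < dist q α := by
    by_contra h; push_neg at h
    exact hqn ⟨Metric.mem_closedBall.mpr h, hqH⟩
  have hconv : Convex ℝ H := hH ▸ convexH c
  -- point y on circle ∂d'' inside d' ∩ H
  obtain ⟨t, ht, hyd⟩ := seg_ivt α' p r hpB.le hrB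
  set y := (1-t)•p + t•r with hy
  have hyA : dist y α ≤ 1 := Metric.mem_closedBall.mp <|
    (convex_closedBall α 1) hp.1 hr.1.1 (by linarith [ht.2]) ht.1 (by ring)
  have hyH : y ∈ H := hconv hpH hrH (by linarith [ht.2]) ht.1 (by ring)
  have hyAlt : dist y α < 1 := lt_of_le_of_ne hyA (fun h => hcirc ⟨y, h, hyd, hyH⟩)
  -- point z on circle ∂d' inside d'' ∩ H
  obtain ⟨s', hs', hzd⟩ := seg_ivt α q r hqA.le hrA
  set z := (1-s')•q + s'•r with hz
  have hzB : dist z α' ≤ 1 := Metric.mem_closedBall.mp <|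
    (convex_closedBall α' 1) hq.1 hr.1.2 (by linarith [hs'.2]) hs'.1 (by ring)
  have hzH : z ∈ H := hconv hqH hrH (by linarith [hs'.2]) hs'.1 (by ring)
  have hzBlt : dist z α' < 1 := lt_of_le_of_ne hzB (fun h => hcirc ⟨z, hzd, h, hzH⟩)
  -- point w equidistant from α, α' inside d' ∩ d'' ∩ H
  set g : ℝ → ℝ := fun u => dist ((1-u)•y + u•z) α - dist ((1-u)•y + u•z) α' with hg
  have hγ : Continuous fun u : ℝ => (1-u)•y + u•z :=
    ((continuous_const.sub continuous_id).smul continuous_const).add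
      (continuous_id.smul continuous_const)
  have hgc : Continuous g := (hγ.dist continuous_const).sub (hγ.dist continuous_const)
  have hg0 : g 0 = dist y α - dist y α' := by simp [hg]
  have hg1 : g 1 = dist z α - dist z α' := by simp [hg]
  have h0mem : (0:ℝ) ∈ Set.Icc (g 0) (g 1) := by
    rw [Set.mem_Icc, hg0, hg1]
    constructor <;> linarith [hyd, hzd]
  obtain ⟨u1, hu1, hgu⟩ := intermediate_value_Icc (by norm_num : (0:ℝ) ≤ 1)
    hgc.continuousOn h0mem
  set w := (1-u1)•y + u1•z with hw
  have hweq : dist w α = dist w α' := by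
    have h := hgu
    rw [hg] at h
    simp only at h
    rw [← hw] at h
    linarith
  have hwA : dist w α ≤ 1 := Metric.mem_closedBall.mp <|
    (convex_closedBall α 1) (Metric.mem_closedBall.mpr hyAlt.le)
      (Metric.mem_closedBall.mpr (le_of_eq hzd)) (by linarith [hu1.2]) hu1.1 (by ring)
  have hwH : w ∈ H := hconv hyH hzH (by linarith [hu1.2]) hu1.1 (by ring)
  have hwAlt : dist w α < 1 :=
    lt_of_le_of_ne hwA (fun h => hcirc ⟨w, h, hweq.symm.trans h, hwH⟩)
  obtain ⟨v, hperp, hvpos, hv0le⟩ := perp_exists α α' hαα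
  have hAeq : ⟪w - α, v⟫ = ⟪w - α', v⟫ := by
    have hdiff : ⟪w - α, v⟫ - ⟪w - α', v⟫ = ⟪α' - α, v⟫ := by
      rw [← inner_sub_left]
      congr 1
      abel
    rw [hperp] at hdiff
    linarith
  have hdisteq : ∀ s : ℝ, dist (w + s • v) α = dist (w + s • v) α' := by
    intro s
    rw [dist_eq_norm, dist_eq_norm]
    have ea : w + s • v - α = (w - α) + s • v := by abel
    have eb : w + s • v - α' = (w - α') + s • v := by abel
    rw [ea, eb]
    have hnn : ‖w - α‖ = ‖w - α'‖ := by
      rw [← dist_eq_norm, ← dist_eq_norm]; exact hweq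
    refine (sq_eq_sq₀ (norm_nonneg _) (norm_nonneg _)).mp ?_
    rw [norm_expand, norm_expand, hnn, hAeq]
  set g2 : ℝ → ℝ := fun s => dist (w + s • v) α with hg2
  have hg2c : Continuous g2 := by
    apply Continuous.dist _ continuous_const
    exact continuous_const.add (continuous_id.smul continuous_const)
  have hg2_0 : g2 0 = dist w α := by simp [hg2]
  set s0 := (1 + dist w α) / ‖v‖ with hs0
  have hs0pos : 0 < s0 := by
    apply div_pos _ hvpos
    have := dist_nonneg (x := w) (y := α)
    linarith
  have hsmul : s0 * ‖v‖ = 1 + dist w α := div_mul_cancel₀ _ (ne_of_gt hvpos)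
  have hg2_s0 : 1 ≤ g2 s0 := by
    have hge : ‖s0 • v‖ - ‖w - α‖ ≤ ‖s0 • v + (w - α)‖ := by
      calc ‖s0 • v‖ - ‖w - α‖ = ‖s0 • v‖ - ‖α - w‖ := by rw [norm_sub_rev]
        _ ≤ ‖s0 • v - (α - w)‖ := norm_sub_norm_le _ _
        _ = ‖s0 • v + (w - α)‖ := by congr 1; abel
    have hval : ‖s0 • v‖ = 1 + dist w α := by
      rw [norm_smul, Real.norm_eq_abs, abs_of_pos hs0pos, hsmul]
    have heq2 : g2 s0 = ‖s0 • v + (w - α)‖ := by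
      rw [hg2]
      simp only [dist_eq_norm]
      congr 1
      abel
    rw [heq2]
    rw [hval] at hge
    have : ‖w - α‖ = dist w α := (dist_eq_norm w α).symm
    linarith
  obtain ⟨s, hsmem, hgs⟩ := intermediate_value_Icc hs0pos.le hg2c.continuousOn
    ⟨by rw [hg2_0]; exact hwAlt.le, hg2_s0⟩
  have hu1d : dist (w + s • v) α = 1 := by rw [hg2] at hgs; exact hgs
  apply hcirc
  refine ⟨w + s • v, hu1d, ?_, ?_⟩
  · rw [← hdisteq s]; exact hu1d
  · rw [hH]
    show (w + s • v) 0 ≤ c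
    have hcoord : (w + s • v) 0 = w 0 + s * v 0 := by
      simp [PiLp.add_apply, PiLp.smul_apply, smul_eq_mul]
    rw [hcoord]
    have hwc : w 0 ≤ c := by rw [hH] at hwH; exact hwH
    have hsv : s * v 0 ≤ 0 := mul_nonpos_iff.mpr (Or.inl ⟨hsmem.1, hv0le⟩)
    linarith
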